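/- Let γ > 0, λ ∈ ℂ, and ℓ ∈ ℕ. There exists a unique entire function F : ℂ → ℂ such that z²F''(z) + 2zF'(z) − ℓ(ℓ+1)F(z) + 2γzF(z) + λz²F(z) = 0 for all z ∈ ℂ, the derivatives F^(j)(0) vanish for all j < ℓ, and F^(ℓ)(0) = ℓ! (equivalently, F has Taylor expansion F(z) = z^ℓ + higher-order terms at 0). -/

import Mathlib

noncomputable section

open FormalMultilinearSeries ENNReal

namespace RadialAux

variable {a b : ℕ → ℂ}


theorem ofScalars_coeff (a : ℕ → ℂ) (n : ℕ) : (ofScalars ℂ a).coeff n = a n := by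
  simp [FormalMultilinearSeries.coeff, ofScalars, List.prod_ofFn]

theorem ofScalars_norm' (a : ℕ → ℂ) (n : ℕ) : ‖ofScalars ℂ a n‖ = ‖a n‖ :=
  ofScalars_norm ℂ a n

/-- Coefficients bounded at every radius. -/
def Bdd (a : ℕ → ℂ) : Prop := ∀ r : ℝ, 0 ≤ r → ∃ C : ℝ, ∀ n : ℕ, ‖a n‖ * r ^ n ≤ C

theorem Bdd.radius {a : ℕ → ℂ} (ha : Bdd a) : (ofScalars ℂ a).radius = ⊤ := by
  rw [eq_top_iff]
  refine le_of_forall_nnreal_lt (fun r _ => ?_)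
  obtain ⟨C, hC⟩ := ha r r.coe_nonneg
  exact (ofScalars ℂ a).le_radius_of_bound C (fun n => by rw [ofScalars_norm']; exact hC n)

theorem bdd_of_radius {a : ℕ → ℂ} (h : (ofScalars ℂ a).radius = ⊤) : Bdd a := by
  intro r hr
  obtain ⟨C, hC0, hC⟩ := (ofScalars ℂ a).norm_mul_pow_le_of_lt_radius
    (r := ⟨r, hr⟩) (by rw [h]; exact coe_lt_top)
  exact ⟨C, fun n => by have := hC n; rwa [ofScalars_norm'] at this⟩

theorem Bdd.shift {a : ℕ → ℂ} (ha : Bdd a) : Bdd (fun n => a (n + 1)) := by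
  intro r hr
  obtain ⟨C, hC⟩ := ha (max r 1) (le_trans zero_le_one (le_max_right _ _))
  refine ⟨C, fun n => ?_⟩
  calc ‖a (n + 1)‖ * r ^ n ≤ ‖a (n + 1)‖ * max r 1 ^ (n + 1) := by
        rw [pow_succ]
        refine mul_le_mul_of_nonneg_left ?_ (norm_nonneg _)
        calc r ^ n ≤ max r 1 ^ n := pow_le_pow_left₀ hr (le_max_left _ _) n
          _ = max r 1 ^ n * 1 := (mul_one _).symm
          _ ≤ max r 1 ^ n * max r 1 := by
            refine mul_le_mul_of_nonneg_left (le_max_right _ _) ?_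
            positivity
    _ ≤ C := hC (n + 1)

theorem Bdd.of_le {a b : ℕ → ℂ} (ha : Bdd a) (hb : ∀ n, ‖b n‖ ≤ (n + 1) * ‖a n‖) :
    Bdd b := by
  intro r hr
  obtain ⟨C, hC⟩ := ha (2 * r) (by positivity)
  refine ⟨2 * C, fun n => ?_⟩
  have h1 : ((n : ℝ) + 1) ≤ 2 * 2 ^ n := by
    induction n with
    | zero => norm_num
    | succ k ih =>
      have h2 : (1:ℝ) ≤ 2 ^ k := one_le_pow₀ (by norm_num)
      push_cast; push_cast at ih; rw [pow_succ]; nlinarith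
  calc ‖b n‖ * r ^ n ≤ ((n : ℝ) + 1) * ‖a n‖ * r ^ n := by
        exact mul_le_mul_of_nonneg_right (hb n) (by positivity)
    _ ≤ (2 * 2 ^ n) * ‖a n‖ * r ^ n := by
        refine mul_le_mul_of_nonneg_right (mul_le_mul_of_nonneg_right h1 (norm_nonneg _)) (by positivity)
    _ = 2 * (‖a n‖ * (2 * r) ^ n) := by ring
    _ ≤ 2 * C := by nlinarith [hC n]

theorem Bdd.summable {a : ℕ → ℂ} (ha : Bdd a) (z : ℂ) :
    Summable (fun n => a n * z ^ n) := by
  obtain ⟨C, hC⟩ := ha (2 * ‖z‖) (by positivity)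
  refine Summable.of_norm_bounded (g := fun n => C * (1/2 : ℝ) ^ n)
    (Summable.mul_left C (summable_geometric_of_lt_one (by norm_num) (by norm_num))) (fun n => ?_)
  have h := hC n
  rw [norm_mul, norm_pow]
  rw [mul_pow] at h
  have h2 : (0:ℝ) < 2 ^ n := by positivity
  calc ‖a n‖ * ‖z‖ ^ n = (‖a n‖ * (2 ^ n * ‖z‖ ^ n)) * (1/2) ^ n := by
        rw [div_pow, one_pow]; field_simp
    _ ≤ C * (1/2 : ℝ) ^ n := by
        refine mul_le_mul_of_nonneg_right ?_ (by positivity)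
        nlinarith


def coef (γ : ℝ) (lam : ℂ) (ℓ : ℕ) : ℕ → ℂ
  | n =>
    if h : n ≤ ℓ then (if n = ℓ then 1 else 0)
    else
      -(2 * (γ : ℂ) * coef γ lam ℓ (n - 1) +
          (if 2 ≤ n then lam * coef γ lam ℓ (n - 2) else 0)) /
        (((n - ℓ : ℕ) : ℂ) * ((n + ℓ + 1 : ℕ) : ℂ))
  decreasing_by all_goals omega

variable (γ : ℝ) (lam : ℂ) (ℓ : ℕ)

theorem coef_of_lt {n : ℕ} (h : n < ℓ) : coef γ lam ℓ n = 0 := by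
  rw [coef]; simp [le_of_lt h, Nat.ne_of_lt h]

theorem coef_self : coef γ lam ℓ ℓ = 1 := by rw [coef]; simp

theorem coef_of_gt {n : ℕ} (h : ℓ < n) : coef γ lam ℓ n =
    -(2 * (γ : ℂ) * coef γ lam ℓ (n - 1) +
        (if 2 ≤ n then lam * coef γ lam ℓ (n - 2) else 0)) /
      (((n - ℓ : ℕ) : ℂ) * ((n + ℓ + 1 : ℕ) : ℂ)) := by
  conv_lhs => rw [coef]
  simp [Nat.not_le.mpr h]

/-- The growth constant. -/
def M : ℝ := 2 * |γ| + ‖lam‖ + 1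

theorem one_le_M : 1 ≤ M γ lam := by
  have := abs_nonneg γ; have := norm_nonneg lam; rw [M]; linarith

theorem coef_bound : ∀ d : ℕ, ‖coef γ lam ℓ (ℓ + d)‖ ≤ M γ lam ^ d / (d / 2).factorial := by
  intro d
  induction d using Nat.strong_induction_on with
  | _ d ih =>
    have hM := one_le_M γ lam
    have hγn : 0 ≤ |γ| := abs_nonneg γ
    have hln : 0 ≤ ‖lam‖ := norm_nonneg lam
    match d with
    | 0 => simp [coef_self]
    | (k + 1) =>
      have hgt : ℓ < ℓ + (k + 1) := by omega
      rw [coef_of_gt γ lam ℓ hgt]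
      have hsub : ℓ + (k + 1) - ℓ = k + 1 := by omega
      -- denominator bound
      have hden : (k + 1 : ℝ) ≤ ‖(((ℓ + (k + 1) - ℓ : ℕ) : ℂ) * ((ℓ + (k + 1) + ℓ + 1 : ℕ) : ℂ))‖ := by
        rw [norm_mul, hsub, Complex.norm_natCast, Complex.norm_natCast]
        have h2 : (1:ℝ) ≤ ((ℓ + (k + 1) + ℓ + 1 : ℕ) : ℝ) := by exact_mod_cast Nat.one_le_iff_ne_zero.mpr (by omega)
        have h1 : ((k+1:ℕ):ℝ) = (k+1:ℝ) := by push_cast; ring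
        nlinarith [h2, h1]
      have hdenpos : (0:ℝ) < k + 1 := by positivity
      -- numerator bound
      set Q : ℝ := (((k - 1) / 2).factorial : ℝ) with hQdef
      have hQ : (0:ℝ) < Q := by rw [hQdef]; positivity
      set NB : ℝ := (2 * |γ| + ‖lam‖) * (M γ lam ^ k / Q) with hNB
      have hNBnn : 0 ≤ NB := by rw [hNB]; positivity
      have hnum : ‖(2 * (γ : ℂ) * coef γ lam ℓ (ℓ + (k + 1) - 1) +
          (if 2 ≤ ℓ + (k + 1) then lam * coef γ lam ℓ (ℓ + (k + 1) - 2) else 0))‖ ≤ NB := by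
        have e1 : ℓ + (k + 1) - 1 = ℓ + k := by omega
        have hp1 : ‖coef γ lam ℓ (ℓ + k)‖ ≤ M γ lam ^ k / Q := by
          refine le_trans (ih k (by omega)) ?_
          refine div_le_div_of_nonneg_left (by positivity) hQ ?_
          rw [hQdef]
          exact_mod_cast Nat.factorial_le (Nat.div_le_div_right (by omega))
        have hp2 : ‖(if 2 ≤ ℓ + (k + 1) then lam * coef γ lam ℓ (ℓ + (k + 1) - 2) else 0)‖
            ≤ ‖lam‖ * (M γ lam ^ k / Q) := by
          split_ifs with h2n
          · rw [norm_mul]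
            match k with
            | 0 =>
              have : ℓ + 1 - 2 < ℓ := by omega
              rw [coef_of_lt γ lam ℓ this, norm_zero, mul_zero]
              positivity
            | (j + 1) =>
              have he : ℓ + (j + 1 + 1) - 2 = ℓ + j := by omega
              rw [he]
              have hj : ‖coef γ lam ℓ (ℓ + j)‖ ≤ M γ lam ^ (j + 1) / Q := by
                refine le_trans (ih j (by omega)) ?_
                have hstep : M γ lam ^ j ≤ M γ lam ^ (j + 1) :=
                  pow_le_pow_right₀ hM (by omega)
                have hQle : Q ≤ ((j / 2).factorial : ℝ) := by
                  rw [hQdef]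
                  exact_mod_cast Nat.factorial_le (Nat.div_le_div_right (by omega))
                calc M γ lam ^ j / ((j / 2).factorial : ℝ)
                    ≤ M γ lam ^ (j + 1) / ((j / 2).factorial : ℝ) := by
                      exact (div_le_div_iff_of_pos_right (by positivity)).mpr hstep
                  _ ≤ M γ lam ^ (j + 1) / Q := div_le_div_of_nonneg_left (by positivity) hQ hQle
              exact mul_le_mul_of_nonneg_left hj hln
          · rw [norm_zero]; positivity
        calc ‖_ + _‖ ≤ ‖2 * (γ:ℂ) * coef γ lam ℓ (ℓ + (k + 1) - 1)‖ + _ := norm_add_le _ _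
          _ ≤ 2 * |γ| * (M γ lam ^ k / Q) + ‖lam‖ * (M γ lam ^ k / Q) := by
            refine add_le_add ?_ hp2
            rw [norm_mul, norm_mul, Complex.norm_ofNat, Complex.norm_real, Real.norm_eq_abs, e1]
            exact mul_le_mul_of_nonneg_left hp1 (by positivity)
          _ = NB := by rw [hNB]; ring
      -- putting it together
      rw [norm_div, norm_neg]
      refine le_trans (div_le_div₀ hNBnn hnum hdenpos hden) ?_
      have hfactn : (((k + 1) / 2).factorial : ℕ) ≤ (k + 1) * ((k - 1) / 2).factorial := by
        rcases Nat.eq_zero_or_pos k with rfl | hk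
        · simp [Nat.factorial]
        · have he : (k + 1) / 2 = (k - 1) / 2 + 1 := by omega
          rw [he, Nat.factorial_succ]
          exact Nat.mul_le_mul_right _ (by omega)
      have hfact : (((k + 1) / 2).factorial : ℝ) ≤ (k + 1) * Q := by
        rw [hQdef]
        exact_mod_cast hfactn
      rw [div_le_div_iff₀ hdenpos (by positivity)]
      have hMk : (0:ℝ) ≤ M γ lam ^ k := by positivity
      have hMM : 2 * |γ| + ‖lam‖ ≤ M γ lam := by rw [M]; linarith
      calc NB * (((k + 1) / 2).factorial : ℝ)
          ≤ NB * ((k + 1) * Q) := mul_le_mul_of_nonneg_left hfact hNBnn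
        _ = ((2 * |γ| + ‖lam‖) * M γ lam ^ k) * (k + 1) := by
            rw [hNB]; field_simp
        _ ≤ (M γ lam * M γ lam ^ k) * (k + 1) := by
            refine mul_le_mul_of_nonneg_right (mul_le_mul_of_nonneg_right hMM hMk) (by positivity)
        _ = M γ lam ^ (k + 1) * (k + 1 : ℝ) := by rw [pow_succ]; ring

theorem M_nonneg (γ : ℝ) (lam : ℂ) : 0 ≤ M γ lam := le_trans zero_le_one (one_le_M γ lam)


theorem ofScalars_apply_one (a : ℕ → ℂ) (n : ℕ) : (ofScalars ℂ a n fun _ => (1:ℂ)) = a n := by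
  rw [ofScalars_apply_eq]; simp

/-- The sum of the power series with coefficients `a`. -/
def S (a : ℕ → ℂ) : ℂ → ℂ := (ofScalars ℂ a).sum

theorem hasFPS (ha : Bdd a) : HasFPowerSeriesOnBall (S a) (ofScalars ℂ a) 0 ⊤ := by
  have := (ofScalars ℂ a).hasFPowerSeriesOnBall (by rw [ha.radius]; exact zero_lt_top)
  rwa [ha.radius] at this

theorem hasSum_S (ha : Bdd a) (z : ℂ) : HasSum (fun n => a n * z ^ n) (S a z) := by
  have h := (hasFPS ha).hasSum (y := z) (by simp)
  rw [zero_add] at h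
  rw [show (fun n => a n * z ^ n) = (fun n => ofScalars ℂ a n fun _ => z) from
    funext fun n => by rw [ofScalars_apply_eq, smul_eq_mul]]
  exact h

theorem S_eq (ha : Bdd a) (z : ℂ) : S a z = ∑' n, a n * z ^ n := (hasSum_S ha z).tsum_eq.symm

theorem S_differentiable (ha : Bdd a) : Differentiable ℂ (S a) := fun z => by
  have := ((hasFPS ha).analyticAt_of_mem (y := z) (by simp)).differentiableAt
  simpa using this

theorem iteratedDeriv_S (ha : Bdd a) (n : ℕ) :
    iteratedDeriv n (S a) 0 = (n.factorial : ℂ) * a n := by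
  have h := (hasFPS ha).factorial_smul (1 : ℂ) n
  rw [ofScalars_apply_one] at h
  rw [iteratedDeriv, ← h, nsmul_eq_mul]

/-- shifted-down derivative coefficients -/
def D (a : ℕ → ℂ) : ℕ → ℂ := fun n => ((n : ℂ) + 1) * a (n + 1)

theorem Bdd.D (ha : Bdd a) : Bdd (RadialAux.D a) := by
  refine Bdd.of_le ha.shift (fun n => ?_)
  rw [RadialAux.D, norm_mul]
  have : ‖((n : ℂ) + 1)‖ = (n : ℝ) + 1 := by
    rw [show ((n : ℂ) + 1) = ((n + 1 : ℕ) : ℂ) by push_cast; ring]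
    rw [Complex.norm_natCast]; push_cast; ring
  rw [this]

theorem deriv_S (ha : Bdd a) : deriv (S a) = S (D a) := by
  funext z
  rcases eq_or_ne z 0 with rfl | hz
  · rw [← iteratedDeriv_one, iteratedDeriv_S ha 1, S_eq ha.D]
    rw [tsum_eq_single 0 (fun n hn => by simp [zero_pow hn])]
    simp [D]
  · have hd := (hasFPS ha).fderiv
    have h := hd.hasSum (y := z) (by simp)
    rw [zero_add] at h
    have h2 := (ContinuousLinearMap.apply ℂ ℂ z).hasSum h
    simp only [ContinuousLinearMap.apply_apply] at h2
    have h3 : ∀ n, ((ofScalars ℂ a).derivSeries n fun _ => z) z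
        = D a n * z ^ n * z := by
      intro n
      rw [FormalMultilinearSeries.derivSeries_apply_diag, ofScalars_apply_eq]
      push_cast [← Nat.cast_smul_eq_nsmul ℂ]
      simp only [D, smul_eq_mul]
      ring
    rw [funext h3] at h2
    have h4 : HasSum (fun n => D a n * z ^ n * z) (S (D a) z * z) :=
      (hasSum_S ha.D z).mul_right z
    have h5 : fderiv ℂ (S a) z z = deriv (S a) z * z := by
      have e : (fderiv ℂ (S a) z) z = (fderiv ℂ (S a) z) (z • 1) := by
        rw [smul_eq_mul, mul_one]
      rw [e, map_smul, fderiv_apply_one_eq_deriv, smul_eq_mul, mul_comm]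
    rw [h5] at h2
    exact mul_right_cancel₀ hz (h4.unique h2).symm



def sh (b : ℕ → ℂ) : ℕ → ℂ
  | 0 => 0
  | n + 1 => b n

@[simp] theorem sh_zero : sh b 0 = 0 := rfl
@[simp] theorem sh_succ {n : ℕ} : sh b (n + 1) = b n := rfl
theorem D_apply {n : ℕ} : D a n = ((n : ℂ) + 1) * a (n + 1) := rfl

theorem bdd_sh (hb : Bdd b) : Bdd (sh b) := by
  intro r hr
  obtain ⟨C, hC⟩ := hb r hr
  refine ⟨max (C * max r 1) 0, fun n => ?_⟩
  match n with
  | 0 => simp [RadialAux.sh]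
  | (k + 1) =>
    have h1 : ‖sh b (k + 1)‖ * r ^ (k + 1) = (‖b k‖ * r ^ k) * r := by
      rw [RadialAux.sh, pow_succ]; ring
    rw [h1]
    refine le_trans ?_ (le_max_left _ _)
    have hrle : r ≤ max r 1 := le_max_left _ _
    have h2 : (‖b k‖ * r ^ k) * r ≤ C * r := mul_le_mul_of_nonneg_right (hC k) hr
    refine le_trans h2 ?_
    rcases le_or_gt 0 C with hC0 | hC0
    · exact mul_le_mul_of_nonneg_left hrle hC0
    · have : ‖b k‖ * r ^ k ≤ C := hC k
      nlinarith [norm_nonneg (b k), pow_nonneg hr k]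

theorem Bdd.add (ha : Bdd a) (hb : Bdd b) : Bdd (fun n => a n + b n) := by
  intro r hr
  obtain ⟨C1, h1⟩ := ha r hr; obtain ⟨C2, h2⟩ := hb r hr
  refine ⟨C1 + C2, fun n => ?_⟩
  calc ‖a n + b n‖ * r ^ n ≤ (‖a n‖ + ‖b n‖) * r ^ n :=
        mul_le_mul_of_nonneg_right (norm_add_le _ _) (by positivity)
    _ = ‖a n‖ * r ^ n + ‖b n‖ * r ^ n := by ring
    _ ≤ C1 + C2 := add_le_add (h1 n) (h2 n)

theorem Bdd.const_mul (ha : Bdd a) (c : ℂ) : Bdd (fun n => c * a n) := by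
  intro r hr
  obtain ⟨C, hC⟩ := ha r hr
  refine ⟨‖c‖ * C, fun n => ?_⟩
  calc ‖c * a n‖ * r ^ n = ‖c‖ * (‖a n‖ * r ^ n) := by rw [norm_mul]; ring
    _ ≤ ‖c‖ * C := mul_le_mul_of_nonneg_left (hC n) (norm_nonneg c)

theorem Bdd.sub (ha : Bdd a) (hb : Bdd b) : Bdd (fun n => a n - b n) := by
  have := ha.add (hb.const_mul (-1))
  simpa [sub_eq_add_neg] using this

theorem S_sh (hb : Bdd b) (z : ℂ) : S (sh b) z = z * S b z := by
  have e : (fun n => sh b (n + 1) * z ^ (n + 1)) = (fun n => b n * z ^ n * z) :=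
    funext fun n => by rw [show sh b (n+1) = b n from rfl, pow_succ]; ring
  have h4 : HasSum (fun n => sh b (n + 1) * z ^ (n + 1)) (S b z * z) := by
    rw [e]; exact (hasSum_S hb z).mul_right z
  have h5 := (hasSum_nat_add_iff (f := fun n => sh b n * z ^ n) 1).1 h4
  simp only [Finset.range_one, Finset.sum_singleton] at h5
  have h6 : sh b 0 * z ^ 0 = 0 := by rw [show sh b 0 = 0 from rfl]; ring
  rw [h6, add_zero] at h5
  exact (hasSum_S (bdd_sh hb) z).unique h5 |>.trans (mul_comm _ _)

/-- combined ODE coefficients -/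
def comb (γ : ℝ) (lam : ℂ) (ℓ : ℕ) (a : ℕ → ℂ) : ℕ → ℂ := fun n =>
  sh (sh (D (D a))) n + 2 * sh (D a) n - ((ℓ * (ℓ + 1) : ℕ) : ℂ) * a n
    + 2 * (γ : ℂ) * sh a n + lam * sh (sh a) n

theorem comb_eq (γ : ℝ) (lam : ℂ) (ℓ : ℕ) (a : ℕ → ℂ) (n : ℕ) :
    comb γ lam ℓ a n = (((n * (n + 1) : ℕ) : ℂ) - ((ℓ * (ℓ + 1) : ℕ) : ℂ)) * a n
      + 2 * (γ : ℂ) * sh a n + lam * sh (sh a) n := by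
  match n with
  | 0 => simp only [comb, sh_zero]; push_cast; ring
  | 1 => simp only [comb, sh_zero, sh_succ, D_apply]; push_cast; ring
  | (k + 2) => simp only [comb, sh_zero, sh_succ, D_apply]; push_cast; ring

theorem bdd_comb {γ : ℝ} {lam : ℂ} {ℓ : ℕ} (ha : Bdd a) : Bdd (comb γ lam ℓ a) := by
  have h1 : Bdd (sh (sh (D (D a)))) := bdd_sh (bdd_sh ha.D.D)
  have h2 : Bdd (fun n => (2:ℂ) * sh (D a) n) := (bdd_sh ha.D).const_mul 2
  have h3 : Bdd (fun n => ((ℓ * (ℓ + 1) : ℕ) : ℂ) * a n) := ha.const_mul _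
  have h4 : Bdd (fun n => 2 * (γ : ℂ) * sh a n) := (bdd_sh ha).const_mul _
  have h5 : Bdd (fun n => lam * sh (sh a) n) := (bdd_sh (bdd_sh ha)).const_mul _
  exact ((((h1.add h2).sub h3).add h4).add h5)

theorem hasSum_comb {γ : ℝ} {lam : ℂ} {ℓ : ℕ} (ha : Bdd a) (z : ℂ) :
    HasSum (fun n => comb γ lam ℓ a n * z ^ n)
      (z ^ 2 * deriv (deriv (S a)) z + 2 * z * deriv (S a) z
        - ((ℓ * (ℓ + 1) : ℕ) : ℂ) * S a z + 2 * (γ : ℂ) * z * S a z + lam * z ^ 2 * S a z) := by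
  have hDD := ha.D.D
  have e2 : deriv (deriv (S a)) = S (D (D a)) := by rw [deriv_S ha, deriv_S ha.D]
  rw [e2, deriv_S ha]
  have v1 : z ^ 2 * S (D (D a)) z = S (sh (sh (D (D a)))) z := by
    rw [S_sh (bdd_sh hDD) z, S_sh hDD z]; ring
  have v2 : 2 * z * S (D a) z = 2 * S (sh (D a)) z := by rw [S_sh ha.D z]; ring
  have v4 : 2 * (γ:ℂ) * z * S a z = 2 * (γ:ℂ) * S (sh a) z := by rw [S_sh ha z]; ring
  have v5 : lam * z ^ 2 * S a z = lam * S (sh (sh a)) z := by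
    rw [S_sh (bdd_sh ha) z, S_sh ha z]; ring
  rw [v1, v2, v4, v5]
  have h1 := hasSum_S (bdd_sh (bdd_sh hDD)) z
  have h2 := (hasSum_S (bdd_sh ha.D) z).mul_left 2
  have h3 := (hasSum_S ha z).mul_left ((ℓ * (ℓ + 1) : ℕ) : ℂ)
  have h4 := (hasSum_S (bdd_sh ha) z).mul_left (2 * (γ:ℂ))
  have h5 := (hasSum_S (bdd_sh (bdd_sh ha)) z).mul_left lam
  have htot := (((h1.add h2).sub h3).add h4).add h5
  have e : (fun n => comb γ lam ℓ a n * z ^ n)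
      = (fun n => sh (sh (D (D a))) n * z ^ n + 2 * (sh (D a) n * z ^ n)
          - ((ℓ * (ℓ + 1) : ℕ) : ℂ) * (a n * z ^ n) + 2 * (γ:ℂ) * (sh a n * z ^ n)
          + lam * (sh (sh a) n * z ^ n)) :=
    funext fun n => by simp only [comb]; ring
  rw [e]
  exact htot



theorem bdd_coef (γ : ℝ) (lam : ℂ) (ℓ : ℕ) : Bdd (coef γ lam ℓ) := by
  intro r hr
  set A : ℝ := M γ lam * r with hA
  have hA0 : 0 ≤ A := mul_nonneg (M_nonneg γ lam) hr
  refine ⟨r ^ ℓ * ((1 + A) * Real.exp (A ^ 2)), fun n => ?_⟩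
  rcases lt_or_ge n ℓ with h | h
  · rw [coef_of_lt γ lam ℓ h, norm_zero, zero_mul]
    positivity
  · obtain ⟨d, rfl⟩ : ∃ d, n = ℓ + d := ⟨n - ℓ, by omega⟩
    have key : A ^ d / ((d / 2).factorial : ℝ) ≤ (1 + A) * Real.exp (A ^ 2) := by
      rcases Nat.even_or_odd d with ⟨k, hk⟩ | ⟨k, hk⟩
      · have hd2 : d / 2 = k := by omega
        have he : A ^ d = (A ^ 2) ^ k := by rw [← pow_mul]; congr 1; omega
        rw [hd2, he]
        refine le_trans (Real.pow_div_factorial_le_exp (x := A ^ 2) (by positivity) k) ?_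
        nlinarith [Real.exp_pos (A ^ 2), Real.exp_le_exp.mpr (le_refl (A^2))]
      · have hd2 : d / 2 = k := by omega
        have he : A ^ d = A * (A ^ 2) ^ k := by
          rw [hk, ← pow_mul, pow_succ']
        rw [hd2, he, mul_div_assoc]
        have h1 := Real.pow_div_factorial_le_exp (x := A ^ 2) (by positivity) k
        have h2 : A * ((A^2)^k / k.factorial) ≤ A * Real.exp (A ^ 2) :=
          mul_le_mul_of_nonneg_left h1 hA0
        nlinarith [Real.exp_pos (A ^ 2)]
    calc ‖coef γ lam ℓ (ℓ + d)‖ * r ^ (ℓ + d)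
        ≤ (M γ lam ^ d / (d / 2).factorial) * r ^ (ℓ + d) := by
          exact mul_le_mul_of_nonneg_right (coef_bound γ lam ℓ d) (by positivity)
      _ = r ^ ℓ * (A ^ d / ((d / 2).factorial : ℝ)) := by
          rw [hA, mul_pow, pow_add]; ring
      _ ≤ r ^ ℓ * ((1 + A) * Real.exp (A ^ 2)) := by
          exact mul_le_mul_of_nonneg_left key (by positivity)

theorem ofScalars_coeff_self (p : FormalMultilinearSeries ℂ ℂ ℂ) :
    ofScalars ℂ (fun n => p.coeff n) = p := by
  funext n
  rw [← p.mkPiRing_coeff_eq n]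
  ext m
  rw [ofScalars]
  simp only [ContinuousMultilinearMap.smul_apply, ContinuousMultilinearMap.mkPiAlgebraFin_apply,
    ContinuousMultilinearMap.mkPiRing_apply]
  rw [List.prod_ofFn, smul_eq_mul, smul_eq_mul]
  ring

theorem entire_rep {G : ℂ → ℂ} (hG : Differentiable ℂ G) :
    Bdd (fun n => iteratedDeriv n G 0 / n.factorial) ∧
      G = S (fun n => iteratedDeriv n G 0 / n.factorial) := by
  set b : ℕ → ℂ := fun n => iteratedDeriv n G 0 / n.factorial with hbdef
  have hball : HasFPowerSeriesOnBall G (ofScalars ℂ b) 0 ⊤ := by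
    have h := hG.hasFPowerSeriesOnBall (0 : ℂ) (R := 1) one_pos
    have hcoeff : ∀ n, (cauchyPowerSeries G 0 ((1:NNReal):ℝ)).coeff n = b n := by
      intro n
      have hf := h.factorial_smul (1 : ℂ) n
      have e1 : (cauchyPowerSeries G 0 ((1:NNReal):ℝ)) n (fun _ => (1:ℂ)) = (cauchyPowerSeries G 0 ((1:NNReal):ℝ)).coeff n := rfl
      have e2 : iteratedFDeriv ℂ n G 0 (fun _ => (1:ℂ)) = iteratedDeriv n G 0 := rfl
      rw [e1, e2] at hf
      rw [hbdef]
      have hne : (n.factorial : ℂ) ≠ 0 := by exact_mod_cast n.factorial_ne_zero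
      field_simp
      rw [mul_comm, ← nsmul_eq_mul]
      exact hf
    have heq : ofScalars ℂ b = cauchyPowerSeries G 0 ((1:NNReal):ℝ) := by
      rw [show b = fun n => (cauchyPowerSeries G 0 ((1:NNReal):ℝ)).coeff n from funext fun n => (hcoeff n).symm]
      exact ofScalars_coeff_self _
    rwa [heq]
  have hrad : Bdd b := by
    have hr : (ofScalars ℂ b).radius = ⊤ := top_le_iff.mp hball.r_le
    exact bdd_of_radius hr
  refine ⟨hrad, funext fun z => ?_⟩
  have h := hball.hasSum (y := z) (by simp)
  rw [zero_add] at h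
  have h2 : HasSum (fun n => b n * z ^ n) (G z) := by
    rw [show (fun n => b n * z ^ n) = (fun n => ofScalars ℂ b n fun _ => z) from
      funext fun n => by rw [ofScalars_apply_eq, smul_eq_mul]]
    exact h
  exact (h2.unique (hasSum_S hrad z))



theorem cast_factor {n : ℕ} (h : ℓ < n) :
    (((n * (n + 1) : ℕ) : ℂ) - ((ℓ * (ℓ + 1) : ℕ) : ℂ))
      = ((n - ℓ : ℕ) : ℂ) * ((n + ℓ + 1 : ℕ) : ℂ) := by
  have hle : ℓ ≤ n := le_of_lt h
  push_cast [Nat.cast_sub hle]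
  ring

theorem factor_ne_zero {n : ℕ} (h : ℓ < n) :
    (((n - ℓ : ℕ) : ℂ) * ((n + ℓ + 1 : ℕ) : ℂ)) ≠ 0 := by
  refine mul_ne_zero (Nat.cast_ne_zero.mpr (by omega)) (Nat.cast_ne_zero.mpr (by omega))

theorem coef_unique
    (h0 : ∀ j, j < ℓ → b j = 0) (hl : b ℓ = 1)
    (hrec : ∀ n, (((n * (n + 1) : ℕ) : ℂ) - ((ℓ * (ℓ + 1) : ℕ) : ℂ)) * b n
      + 2 * (γ : ℂ) * sh b n + lam * sh (sh b) n = 0) :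
    ∀ n, b n = coef γ lam ℓ n := by
  intro n
  induction n using Nat.strong_induction_on with
  | _ n ih =>
    rcases lt_trichotomy n ℓ with h | rfl | h
    · rw [h0 n h, coef_of_lt γ lam ℓ h]
    · rw [hl, coef_self]
    · have hK := factor_ne_zero ℓ h
      have hr := hrec n
      rw [cast_factor ℓ h] at hr
      rw [coef_of_gt γ lam ℓ h]
      match n, h with
      | 1, h =>
        have hl0 : ℓ = 0 := by omega
        subst hl0
        simp only [sh_succ, sh_zero, mul_zero, add_zero] at hr
        rw [ih 0 (by omega)] at hr
        simp only [show ¬ (2 ≤ 1) by omega, if_false, add_zero]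
        rw [eq_div_iff hK]
        simp only [show (1:ℕ) - 1 = 0 from rfl] at *
        linear_combination hr
      | (j + 2), h =>
        have e1 : j + 2 - 1 = j + 1 := by omega
        have e2 : j + 2 - 2 = j := by omega
        simp only [sh_succ] at hr
        rw [ih (j + 1) (by omega), ih j (by omega)] at hr
        simp only [e1, e2, show (2 ≤ j + 2) by omega, if_true]
        rw [eq_div_iff hK]
        linear_combination hr

/-- combined coefficients of `coef` vanish -/
theorem comb_coef_zero (γ : ℝ) (lam : ℂ) (ℓ : ℕ) :
    ∀ n, comb γ lam ℓ (coef γ lam ℓ) n = 0 := by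
  have sh1 : ∀ n : ℕ, n ≤ ℓ → sh (coef γ lam ℓ) n = 0 := by
    intro n h
    match n with
    | 0 => rfl
    | m + 1 => exact coef_of_lt γ lam ℓ (by omega)
  have sh2 : ∀ n : ℕ, n ≤ ℓ → sh (sh (coef γ lam ℓ)) n = 0 := by
    intro n h
    match n with
    | 0 => rfl
    | 1 => rfl
    | m + 2 => exact coef_of_lt γ lam ℓ (by omega)
  intro n
  rw [comb_eq]
  rcases lt_trichotomy n ℓ with h | rfl | h
  · rw [coef_of_lt γ lam ℓ h, sh1 n (le_of_lt h), sh2 n (le_of_lt h)]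
    ring
  · rw [sh1 n (le_refl n), sh2 n (le_refl n), sub_self]
    ring
  · have hK := factor_ne_zero ℓ h
    rw [cast_factor ℓ h, coef_of_gt γ lam ℓ h]
    match n, h, hK with
    | 1, h, hK =>
      have hl0 : ℓ = 0 := by omega
      subst hl0
      rw [show sh (coef γ lam 0) 1 = coef γ lam 0 0 from rfl,
        show sh (sh (coef γ lam 0)) 1 = 0 from rfl]
      simp only [show ¬ (2 ≤ 1) by omega, if_false, add_zero, mul_zero]
      rw [mul_comm, div_mul_cancel₀ _ hK]
      ring
    | (j + 2), h, hK =>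
      have e1 : j + 2 - 1 = j + 1 := by omega
      have e2 : j + 2 - 2 = j := by omega
      rw [show sh (coef γ lam ℓ) (j+2) = coef γ lam ℓ (j+1) from rfl,
        show sh (sh (coef γ lam ℓ)) (j+2) = coef γ lam ℓ j from rfl, e1, e2]
      simp only [show (2 ≤ j + 2) by omega, if_true]
      rw [mul_comm, div_mul_cancel₀ _ hK]
      ring

end RadialAux

open RadialAux

/-- Existence and uniqueness of the regular solution `F_{ℓ,λ}` of the radial Schrödinger
equation: the unique entire function with `z²F'' + 2zF' − ℓ(ℓ+1)F + 2γzF + λz²F = 0`,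
vanishing derivatives of order `< ℓ` at `0`, and `F^(ℓ)(0) = ℓ!`. -/
theorem regular_solution_exists_unique (γ : ℝ) (hγ : 0 < γ) (lam : ℂ) (ℓ : ℕ) :
    ∃! F : ℂ → ℂ,
      Differentiable ℂ F ∧
      (∀ z : ℂ, z ^ 2 * deriv (deriv F) z + 2 * z * deriv F z
          - ((ℓ * (ℓ + 1) : ℕ) : ℂ) * F z + 2 * (γ : ℂ) * z * F z + lam * z ^ 2 * F z = 0) ∧
      (∀ j : ℕ, j < ℓ → iteratedDeriv j F 0 = 0) ∧
      iteratedDeriv ℓ F 0 = (Nat.factorial ℓ : ℂ) := by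
  have hc : Bdd (coef γ lam ℓ) := bdd_coef γ lam ℓ
  refine ⟨S (coef γ lam ℓ), ⟨S_differentiable hc, ?_, ?_, ?_⟩, ?_⟩
  · -- the ODE
    intro z
    have h := hasSum_comb (γ := γ) (lam := lam) (ℓ := ℓ) hc z
    rw [show (fun n => comb γ lam ℓ (coef γ lam ℓ) n * z ^ n) = (fun _ => (0:ℂ)) from
      funext fun n => by rw [comb_coef_zero γ lam ℓ n, zero_mul]] at h
    exact (hasSum_zero.unique h).symm
  · intro j hj
    rw [iteratedDeriv_S hc j, coef_of_lt γ lam ℓ hj, mul_zero]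
  · rw [iteratedDeriv_S hc ℓ, coef_self, mul_one]
  · -- uniqueness
    rintro G ⟨hGd, hGode, hGinit, hGtop⟩
    obtain ⟨hb, hGeq⟩ := entire_rep hGd
    set b : ℕ → ℂ := fun n => iteratedDeriv n G 0 / n.factorial with hbdef
    have hfacne : ∀ n : ℕ, (n.factorial : ℂ) ≠ 0 := fun n => by
      exact_mod_cast n.factorial_ne_zero
    have hb0 : ∀ j, j < ℓ → b j = 0 := fun j hj => by
      rw [hbdef]; simp only; rw [hGinit j hj, zero_div]
    have hbl : b ℓ = 1 := by
      rw [hbdef]; simp only; rw [hGtop, div_self (hfacne ℓ)]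
    have hcomb0 : ∀ n, comb γ lam ℓ b n = 0 := by
      have hSzero : ∀ z, S (comb γ lam ℓ b) z = 0 := by
        intro z
        have h1 := hasSum_comb (γ := γ) (lam := lam) (ℓ := ℓ) hb z
        have h2 := hGode z
        rw [hGeq] at h2
        rw [h2] at h1
        exact (hasSum_S (bdd_comb hb) z).unique h1
      intro n
      have hiter := iteratedDeriv_S (bdd_comb (γ := γ) (lam := lam) (ℓ := ℓ) hb) n
      rw [show S (comb γ lam ℓ b) = fun _ => (0:ℂ) from funext hSzero] at hiter
      rw [show iteratedDeriv n (fun _ : ℂ => (0:ℂ)) 0 = 0 by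
        rw [iteratedDeriv]
        rw [iteratedFDeriv_zero_fun]
        simp] at hiter
      exact (mul_eq_zero.mp hiter.symm).resolve_left (hfacne n)
    have hrec : ∀ n, (((n * (n + 1) : ℕ) : ℂ) - ((ℓ * (ℓ + 1) : ℕ) : ℂ)) * b n
        + 2 * (γ : ℂ) * sh b n + lam * sh (sh b) n = 0 := fun n => by
      have := hcomb0 n
      rwa [comb_eq] at this
    have hbc : b = coef γ lam ℓ := funext (coef_unique γ lam ℓ hb0 hbl hrec)
    rw [hGeq, hbc]
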